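/- Derivability of the shift-embedding rule: in the symmetric data/codata calculus extended with μ-abstractions and, for each type T, the shift type declarations cbv data type ⇑T { CBV(x :prd T) } and cbn codata type ⇓T { CBN(x :con T) }, the following rule is derivable for every orientation o ∈ {prd, con}, evaluation strategy s ∈ {cbv, cbn}, expression e and type T: if Γ ⊢ e :ᵒ T then Γ ⊢ S^o_s(e) :ᵒ ⇕_s T, where ⇕_cbv T = ⇑T and ⇕_cbn T = ⇓T, and the wrapping function S is defined by S^prd_cbv(e) = CBV(e), S^prd_cbn(e) = match_codata ⇓T { CBN(x) ⇒ e ≫ x }, S^con_cbv(e) = match_data ⇑T { CBV(x) ⇒ x ≫ e }, and S^con_cbn(e) = CBN(e). -/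

import Mathlib

namespace SymCalc

/-! Basic syntactic categories of the symmetric data/codata calculus (CPS fragment). -/

abbrev Var := String
abbrev TName := String
abbrev XName := String

inductive Polarity | dat | cod
deriving DecidableEq, Repr

inductive Orientation | prd | con
deriving DecidableEq, Repr

inductive Strategy | cbv | cbn
deriving DecidableEq, Repr

def Polarity.flip : Polarity → Polarity
  | .dat => .cod | .cod => .dat

def Orientation.flip : Orientation → Orientation
  | .prd => .con | .con => .prd

def Strategy.flip : Strategy → Strategy
  | .cbv => .cbn | .cbn => .cbv

/-- `val p` : the orientation of the canonical xtors of a type of polarity `p`. -/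
def Polarity.val : Polarity → Orientation
  | .dat => .prd | .cod => .con

/-- `cnt p` : the orientation of (co)pattern matches on a type of polarity `p`. -/
def Polarity.cnt : Polarity → Orientation
  | .dat => .con | .cod => .prd

/-- Typing contexts: each variable carries an orientation (producer/consumer) and a type name.
The head of the list is the innermost binding. -/
abbrev Ctx := List (Var × Orientation × TName)

/-- Erase the variable names of a context, keeping orientations and types. -/
def eraseCtx (Γ : Ctx) : List (Orientation × TName) := Γ.map (·.2)

mutual
/-- Expressions `e ::= x | 𝒳σ | match_p T { 𝒳Δ ⇒ c; … } | μ(x :ᵒ T).c`.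
In `mu o x T c` the orientation `o` is the orientation of the μ-abstraction itself
(a producer μ-abstraction `μ(x :prd T).c` abstracts over a consumer variable `x`,
and dually for consumer μ-abstractions). -/
inductive Expr : Type
  | var : Var → Expr
  | xtor : XName → List Expr → Expr
  | mtch : Polarity → TName → List (XName × Ctx × Cmd) → Expr
  | mu : Orientation → Var → TName → Cmd → Expr
/-- Commands `c ::= e₁ ≫ e₂ | Done`. -/
inductive Cmd : Type
  | cut : Expr → Expr → Cmd
  | done : Cmd
end

/-! Substitution. -/

abbrev Env := List (Var × Expr)

/-- Remove the bindings shadowed by the bound variables `xs`. -/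
def shadowV (xs : List Var) (m : Env) : Env :=
  m.filter (fun q => ¬ xs.contains q.1)

mutual
/-- Substitute the (closed) expressions of `m` for free variables in an expression. -/
def substExpr (m : Env) : Expr → Expr
  | .var x => (m.lookup x).getD (.var x)
  | .xtor n σ => .xtor n (σ.attach.map (fun ⟨e, _⟩ => substExpr m e))
  | .mtch p T cases =>
      .mtch p T (cases.attach.map
        (fun ⟨cs, _⟩ => (cs.1, cs.2.1, substCmd (shadowV (cs.2.1.map (·.1)) m) cs.2.2)))
  | .mu o x T c => .mu o x T (substCmd (shadowV [x] m) c)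
termination_by e => sizeOf e
decreasing_by
  · have h := List.sizeOf_lt_of_mem ‹e ∈ σ›
    simp only [Expr.xtor.sizeOf_spec]; omega
  · have h := List.sizeOf_lt_of_mem ‹cs ∈ cases›
    obtain ⟨n', Δ', c'⟩ := cs
    simp only [Expr.mtch.sizeOf_spec, Prod.mk.sizeOf_spec] at h ⊢; omega
  · simp only [Expr.mu.sizeOf_spec]; omega
/-- Substitute the (closed) expressions of `m` for free variables in a command. -/
def substCmd (m : Env) : Cmd → Cmd
  | .cut e₁ e₂ => .cut (substExpr m e₁) (substExpr m e₂)
  | .done => .done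
termination_by c => sizeOf c
decreasing_by
  · simp only [Cmd.cut.sizeOf_spec]; omega
  · simp only [Cmd.cut.sizeOf_spec]; omega
end

/-- Pair the variables of a context with the expressions of a substitution. -/
def bindArgs (Δ : Ctx) (σ : List Expr) : Env := List.zip (Δ.map (·.1)) σ

/-! Programs. -/

/-- A function declaration `𝒳Π := match_p T { 𝒴Δ ⇒ c; … }` (co)pattern matching on
all xtors of the type it belongs to. -/
structure FunDecl where
  name : XName
  args : Ctx
  cases : List (XName × Ctx × Cmd)

/-- A type declaration `s p type T { 𝒳Δ; … } with f₁ … fₙ`. -/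
structure TypeDecl where
  strat : Strategy
  pol : Polarity
  name : TName
  xtors : List (XName × Ctx)
  funs : List FunDecl

/-- A program: a list of type declarations together with a top-level command. -/
structure Program where
  decls : List TypeDecl
  main : Cmd

def Program.findType (P : Program) (T : TName) : Option TypeDecl :=
  P.decls.find? (fun td => td.name = T)

/-- The polarity of the type named `T` in the program, if declared. -/
def polOf? (P : Program) (T : TName) : Option Polarity := (P.findType T).map (·.pol)

/-- The evaluation strategy of the type named `T` in the program, if declared. -/
def stratOf? (P : Program) (T : TName) : Option Strategy := (P.findType T).map (·.strat)

/-- The identity substitution `id_Γ`: the list of the variables bound in `Γ`, in order. -/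
def idSubst (Γ : Ctx) : List Expr := Γ.map (fun g => Expr.var g.1)

/-! Free variables. -/

mutual
/-- `FVE x e`: the variable `x` occurs free in the expression `e`. -/
inductive FVE : Var → Expr → Prop
  | var : ∀ x, FVE x (.var x)
  | xtor : ∀ x n σ e, e ∈ σ → FVE x e → FVE x (.xtor n σ)
  | mtch : ∀ x p T cases cs, cs ∈ cases → FVC x cs.2.2 →
      (∀ v ∈ cs.2.1, v.1 ≠ x) → FVE x (.mtch p T cases)
  | mu : ∀ x o y T c, FVC x c → y ≠ x → FVE x (.mu o y T c)
/-- `FVC x c`: the variable `x` occurs free in the command `c`. -/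
inductive FVC : Var → Cmd → Prop
  | cutl : ∀ x e₁ e₂, FVE x e₁ → FVC x (.cut e₁ e₂)
  | cutr : ∀ x e₁ e₂, FVE x e₂ → FVC x (.cut e₁ e₂)
end


/-! Typing for the calculus extended with μ-abstractions. -/

mutual
/-- Expression typing `Γ ⊢ e :ᵒ T`. -/
inductive HasTy (P : Program) : Ctx → Expr → Orientation → TName → Prop
  | var : ∀ Γ x o T, Γ.lookup x = some (o, T) → HasTy P Γ (.var x) o T
  | xtor : ∀ Γ td X Δ τ, td ∈ P.decls → (X, Δ) ∈ td.xtors →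
      SubstTy P Γ τ Δ → HasTy P Γ (.xtor X τ) td.pol.val td.name
  | fn : ∀ Γ td f τ, td ∈ P.decls → f ∈ td.funs →
      SubstTy P Γ τ f.args → HasTy P Γ (.xtor f.name τ) td.pol.cnt td.name
  | mtch : ∀ Γ td cases, td ∈ P.decls →
      cases.map (fun cs => (cs.1, eraseCtx cs.2.1)) = td.xtors.map (fun g => (g.1, eraseCtx g.2)) →
      (∀ cs ∈ cases, CmdTy P (cs.2.1 ++ Γ) cs.2.2) →
      HasTy P Γ (.mtch td.pol td.name cases) td.pol.cnt td.name
  | mu : ∀ Γ o x T c, CmdTy P ((x, o.flip, T) :: Γ) c →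
      HasTy P Γ (.mu o x T c) o T
/-- Substitution typing `Γ ⊢ σ : Δ`. -/
inductive SubstTy (P : Program) : Ctx → List Expr → Ctx → Prop
  | nil : ∀ Γ, SubstTy P Γ [] []
  | cons : ∀ Γ σ Δ e x o T, SubstTy P Γ σ Δ → HasTy P Γ e o T →
      SubstTy P Γ (e :: σ) ((x, o, T) :: Δ)
/-- Command typing `Γ ⊢ c :cmd`. -/
inductive CmdTy (P : Program) : Ctx → Cmd → Prop
  | cut : ∀ Γ e₁ e₂ T, HasTy P Γ e₁ .prd T → HasTy P Γ e₂ .con T → CmdTy P Γ (.cut e₁ e₂)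
  | done : ∀ Γ, CmdTy P Γ .done
end

/-! Shift types and the shift-embedding `S^o_s`. -/

/-- The declaration `cbv data type ⇑T { CBV(x :prd T) }` of the call-by-value shift of `T`
(with type name `upN`, constructor name `cbvX` and bound variable `x`). -/
def upDecl (T upN : TName) (cbvX : XName) (x : Var) : TypeDecl :=
  ⟨.cbv, .dat, upN, [(cbvX, [(x, .prd, T)])], []⟩

/-- The declaration `cbn codata type ⇓T { CBN(x :con T) }` of the call-by-name shift of `T`
(with type name `downN`, destructor name `cbnX` and bound variable `x`). -/
def downDecl (T downN : TName) (cbnX : XName) (x : Var) : TypeDecl :=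
  ⟨.cbn, .cod, downN, [(cbnX, [(x, .con, T)])], []⟩

/-- `⇕_s T`: the name of the `s`-shift of `T` (`⇕_cbv T = ⇑T`, `⇕_cbn T = ⇓T`). -/
def shiftName (s : Strategy) (upN downN : TName) : TName :=
  match s with | .cbv => upN | .cbn => downN

/-- The wrapping function `S^o_s(e)`:
`S^prd_cbv(e) = CBV(e)`, `S^prd_cbn(e) = match_codata ⇓T { CBN(k) ⇒ e ≫ k }`,
`S^con_cbv(e) = match_data ⇑T { CBV(k) ⇒ k ≫ e }`, `S^con_cbn(e) = CBN(e)`,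
where `k` is a fresh bound variable. -/
def wrapShift (o : Orientation) (s : Strategy) (T upN downN : TName)
    (cbvX cbnX : XName) (k : Var) (e : Expr) : Expr :=
  match o, s with
  | .prd, .cbv => .xtor cbvX [e]
  | .prd, .cbn => .mtch .cod downN [(cbnX, [(k, .con, T)], .cut e (.var k))]
  | .con, .cbv => .mtch .dat upN [(cbvX, [(k, .prd, T)], .cut (.var k) e)]
  | .con, .cbn => .xtor cbnX [e]


/-! Auxiliary lemmas for the proof. -/

lemma lookup_mid {β : Type} (k y : Var) (b : β) :
    ∀ (Γ₁ Γ₂ : List (Var × β)), (y ≠ k ∨ (Γ₁.lookup y).isSome) →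
      (Γ₁ ++ (k, b) :: Γ₂).lookup y = (Γ₁ ++ Γ₂).lookup y := by
  intro Γ₁
  induction Γ₁ with
  | nil =>
    intro Γ₂ h
    have hy : y ≠ k := by
      rcases h with h | h
      · exact h
      · simp [List.lookup] at h
    have hb : (y == k) = false := by simp [hy]
    simp [List.lookup, hb]
  | cons hd tl ih =>
    intro Γ₂ h
    obtain ⟨a, v⟩ := hd
    by_cases hya : y = a
    · subst hya
      simp [List.lookup]
    · have hne : (y == a) = false := by simp [hya]
      simp only [List.cons_append, List.lookup, hne]
      apply ih
      rcases h with h | h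
      · exact Or.inl h
      · right
        simpa [List.lookup, hne] using h

lemma mem_keys_lookup_isSome {β : Type} (k : Var) :
    ∀ (Γ : List (Var × β)), k ∈ Γ.map (·.1) → (Γ.lookup k).isSome := by
  intro Γ
  induction Γ with
  | nil => simp
  | cons hd tl ih =>
    intro h
    obtain ⟨a, v⟩ := hd
    by_cases hka : k = a
    · subst hka; simp [List.lookup]
    · have hne : (k == a) = false := by simp [hka]
      simp only [List.lookup, hne]
      apply ih
      simpa [hka] using h

/-- Weakening: insert a binding at any point of the context that does not
capture a free variable. -/
theorem weakenE {P : Program} {Γ : Ctx} {e : Expr} {o : Orientation} {T : TName}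
    (h : HasTy P Γ e o T) :
    ∀ (k : Var) (b : Orientation × TName) (Γ₁ Γ₂ : Ctx), Γ = Γ₁ ++ Γ₂ →
      (FVE k e → k ∈ Γ₁.map (·.1)) → HasTy P (Γ₁ ++ (k, b) :: Γ₂) e o T := by
  induction h using HasTy.rec
    (motive_2 := fun Γ τ Δ _ =>
      ∀ (k : Var) (b : Orientation × TName) (Γ₁ Γ₂ : Ctx), Γ = Γ₁ ++ Γ₂ →
        (∀ e ∈ τ, FVE k e → k ∈ Γ₁.map (·.1)) → SubstTy P (Γ₁ ++ (k, b) :: Γ₂) τ Δ)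
    (motive_3 := fun Γ c _ =>
      ∀ (k : Var) (b : Orientation × TName) (Γ₁ Γ₂ : Ctx), Γ = Γ₁ ++ Γ₂ →
        (FVC k c → k ∈ Γ₁.map (·.1)) → CmdTy P (Γ₁ ++ (k, b) :: Γ₂) c) with
  | var Γ y o T hlk =>
    intro k b Γ₁ Γ₂ hΓ hfv
    subst hΓ
    apply HasTy.var
    rw [lookup_mid k y b Γ₁ Γ₂]
    · exact hlk
    · by_cases hyk : y = k
      · subst hyk
        exact Or.inr (mem_keys_lookup_isSome y Γ₁ (hfv (FVE.var y)))
      · exact Or.inl hyk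
  | xtor Γ td X Δ τ htd hx hτ ih =>
    intro k b Γ₁ Γ₂ hΓ hfv
    exact HasTy.xtor _ td X Δ τ htd hx
      (ih k b Γ₁ Γ₂ hΓ (fun e he hf => hfv (FVE.xtor k X τ e he hf)))
  | fn Γ td f τ htd hf hτ ih =>
    intro k b Γ₁ Γ₂ hΓ hfv
    exact HasTy.fn _ td f τ htd hf
      (ih k b Γ₁ Γ₂ hΓ (fun e he hfr => hfv (FVE.xtor k f.name τ e he hfr)))
  | mtch Γ td cases htd hmap hcmd ih =>
    intro k b Γ₁ Γ₂ hΓ hfv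
    apply HasTy.mtch _ td cases htd hmap
    intro cs hcs
    have : (cs.2.1 ++ Γ₁) ++ (k, b) :: Γ₂ = cs.2.1 ++ (Γ₁ ++ (k, b) :: Γ₂) := by
      simp [List.append_assoc]
    rw [← this]
    apply ih cs hcs k b (cs.2.1 ++ Γ₁) Γ₂ (by rw [hΓ, List.append_assoc])
    intro hfc
    by_cases hall : ∀ v ∈ cs.2.1, v.1 ≠ k
    · have : FVE k (Expr.mtch td.pol td.name cases) :=
        FVE.mtch k td.pol td.name cases cs hcs hfc hall
      simp only [List.map_append, List.mem_append]
      exact Or.inr (hfv this)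
    · push_neg at hall
      obtain ⟨v, hv, hvk⟩ := hall
      simp only [List.map_append, List.mem_append]
      exact Or.inl (List.mem_map.mpr ⟨v, hv, hvk⟩)
  | mu Γ o x T c hc ih =>
    intro k b Γ₁ Γ₂ hΓ hfv
    apply HasTy.mu
    have : ((x, o.flip, T) :: Γ₁) ++ (k, b) :: Γ₂ = (x, o.flip, T) :: (Γ₁ ++ (k, b) :: Γ₂) := by
      simp
    rw [← this]
    apply ih k b ((x, o.flip, T) :: Γ₁) Γ₂ (by rw [hΓ]; rfl)
    intro hfc
    by_cases hxk : x = k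
    · simp [hxk]
    · have : FVE k (Expr.mu o x T c) := FVE.mu k o x T c hfc hxk
      simp only [List.map_cons, List.mem_cons]
      exact Or.inr (hfv this)
  | nil Γ k b Γ₁ Γ₂ hΓ hfv =>
    exact SubstTy.nil _
  | cons Γ σ Δ e x o T hσ he ihσ ihe k b Γ₁ Γ₂ hΓ hfv =>
    exact SubstTy.cons _ σ Δ e x o T
      (ihσ k b Γ₁ Γ₂ hΓ (fun e' he' => hfv e' (List.mem_cons_of_mem _ he')))
      (ihe k b Γ₁ Γ₂ hΓ (hfv e List.mem_cons_self))
  | cut Γ e₁ e₂ T h₁ h₂ ih₁ ih₂ k b Γ₁ Γ₂ hΓ hfv =>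
    exact CmdTy.cut _ e₁ e₂ T
      (ih₁ k b Γ₁ Γ₂ hΓ (fun hf => hfv (FVC.cutl k e₁ e₂ hf)))
      (ih₂ k b Γ₁ Γ₂ hΓ (fun hf => hfv (FVC.cutr k e₁ e₂ hf)))
  | done Γ k b Γ₁ Γ₂ hΓ hfv =>
    exact CmdTy.done _

/-- **Derivability of the shift-embedding rule**: if the shift type declarations for `T`
are present in the program, then for every orientation `o`, strategy `s` and expression
`e`, from `Γ ⊢ e :ᵒ T` one can derive `Γ ⊢ S^o_s(e) :ᵒ ⇕_s T`
(the bound variable `k` of the wrapper being fresh for `e`). -/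
theorem shift_embedding_derivable (P : Program) (T upN downN : TName)
    (cbvX cbnX : XName) (x : Var)
    (hup : upDecl T upN cbvX x ∈ P.decls)
    (hdown : downDecl T downN cbnX x ∈ P.decls)
    (o : Orientation) (s : Strategy) (Γ : Ctx) (e : Expr) (k : Var)
    (hk : ¬ FVE k e)
    (he : HasTy P Γ e o T) :
    HasTy P Γ (wrapShift o s T upN downN cbvX cbnX k e) o (shiftName s upN downN) := by
  have hw : HasTy P ((k, o.flip, T) :: Γ) e o T := by
    have := weakenE he k (o.flip, T) [] Γ rfl (fun hf => absurd hf hk)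
    simpa using this
  cases o <;> cases s
  · -- prd, cbv
    exact HasTy.xtor Γ (upDecl T upN cbvX x) cbvX [(x, .prd, T)] [e] hup
      (by simp [upDecl]) (SubstTy.cons _ _ _ _ x .prd T (SubstTy.nil _) he)
  · -- prd, cbn
    refine HasTy.mtch Γ (downDecl T downN cbnX x)
      [(cbnX, [(k, .con, T)], .cut e (.var k))] hdown (by simp [downDecl, eraseCtx]) ?_
    intro cs hcs
    simp only [List.mem_singleton] at hcs
    subst hcs
    exact CmdTy.cut _ e (.var k) T hw (HasTy.var _ k .con T (by simp [List.lookup]))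
  · -- con, cbv
    refine HasTy.mtch Γ (upDecl T upN cbvX x)
      [(cbvX, [(k, .prd, T)], .cut (.var k) e)] hup (by simp [upDecl, eraseCtx]) ?_
    intro cs hcs
    simp only [List.mem_singleton] at hcs
    subst hcs
    exact CmdTy.cut _ (.var k) e T (HasTy.var _ k .prd T (by simp [List.lookup])) hw
  · -- con, cbn
    exact HasTy.xtor Γ (downDecl T downN cbnX x) cbnX [(x, .con, T)] [e] hdown
      (by simp [downDecl]) (SubstTy.cons _ _ _ _ x .con T (SubstTy.nil _) he)


end SymCalc
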